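/- Every diamond of the graph 𝒢_n (n ≥ 1) either is contained in the power set of {0,…,n−1}, or is contained in the set of subsets of {0,…,n} containing n, or contains exactly two controlling edges; moreover these three classes partition the set of all diamonds of 𝒢_n. -/
import Mathlib


/-- every diamond `𝒟(C,a,b)` of the graph `𝒢_n` (vertices: subsets of
`[n] = {0,…,n}`, modeled as `Fin (n+1)`, adjacency: covering pairs) either is
contained in the power set of `[n-1]` (no vertex contains `n = Fin.last n`), or is
contained in `2^[n] − 2^[n-1]` (every vertex contains `n`), or contains exactly two
controlling edges; and these three classes are pairwise exclusive. A controlling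
edge is an edge of the form `(A, A ∪ {n})` with `n ∉ A`. -/
theorem diamond_trichotomy (n : ℕ) (hn : 1 ≤ n)
    (C : Finset (Fin (n + 1))) (a b : Fin (n + 1))
    (ha : a ∉ C) (hb : b ∉ C) (hab : a ≠ b) :
    -- the four vertices of the diamond are C, insert a C, insert b C, insert a (insert b C)
    ((Fin.last n ∉ C ∧ Fin.last n ∉ insert a C ∧ Fin.last n ∉ insert b C ∧
        Fin.last n ∉ insert a (insert b C)) ∨
      (Fin.last n ∈ C ∧ Fin.last n ∈ insert a C ∧ Fin.last n ∈ insert b C ∧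
        Fin.last n ∈ insert a (insert b C)) ∨
      ((if Fin.last n ∉ C ∧ insert a C = insert (Fin.last n) C then 1 else 0) +
        (if Fin.last n ∉ C ∧ insert b C = insert (Fin.last n) C then 1 else 0) +
        (if Fin.last n ∉ insert a C ∧
            insert b (insert a C) = insert (Fin.last n) (insert a C) then 1 else 0) +
        (if Fin.last n ∉ insert b C ∧
            insert a (insert b C) = insert (Fin.last n) (insert b C) then 1 else 0) = 2)) ∧
    ¬((Fin.last n ∉ C ∧ Fin.last n ∉ insert a C ∧ Fin.last n ∉ insert b C ∧
        Fin.last n ∉ insert a (insert b C)) ∧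
      (Fin.last n ∈ C ∧ Fin.last n ∈ insert a C ∧ Fin.last n ∈ insert b C ∧
        Fin.last n ∈ insert a (insert b C))) ∧
    ¬((Fin.last n ∉ C ∧ Fin.last n ∉ insert a C ∧ Fin.last n ∉ insert b C ∧
        Fin.last n ∉ insert a (insert b C)) ∧
      ((if Fin.last n ∉ C ∧ insert a C = insert (Fin.last n) C then 1 else 0) +
        (if Fin.last n ∉ C ∧ insert b C = insert (Fin.last n) C then 1 else 0) +
        (if Fin.last n ∉ insert a C ∧
            insert b (insert a C) = insert (Fin.last n) (insert a C) then 1 else 0) +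
        (if Fin.last n ∉ insert b C ∧
            insert a (insert b C) = insert (Fin.last n) (insert b C) then 1 else 0) = 2)) ∧
    ¬((Fin.last n ∈ C ∧ Fin.last n ∈ insert a C ∧ Fin.last n ∈ insert b C ∧
        Fin.last n ∈ insert a (insert b C)) ∧
      ((if Fin.last n ∉ C ∧ insert a C = insert (Fin.last n) C then 1 else 0) +
        (if Fin.last n ∉ C ∧ insert b C = insert (Fin.last n) C then 1 else 0) +
        (if Fin.last n ∉ insert a C ∧
            insert b (insert a C) = insert (Fin.last n) (insert a C) then 1 else 0) +
        (if Fin.last n ∉ insert b C ∧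
            insert a (insert b C) = insert (Fin.last n) (insert b C) then 1 else 0) = 2)) := by
  by_cases hC : Fin.last n ∈ C <;>
    by_cases haL : a = Fin.last n <;>
      by_cases hbL : b = Fin.last n <;>
  simp_all [Finset.mem_insert, Finset.insert_comm, Finset.Subset.antisymm_iff,
    Finset.insert_subset_iff, eq_comm (a := Fin.last n)]
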